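/- Let n ≥ 2, λ > -n/2, μ a finite positive Borel measure on S^{n-1}, and u the P_λ-Poisson integral of μ. Then for every unit vector ζ, lim_{r→1⁻} (1-r)^(n-1) u(rζ) = 2^(1+2λ) μ({ζ}). -/

import Mathlib

open MeasureTheory Filter Real Set

set_option maxHeartbeats 1600000 in
theorem stmt11 (n : ℕ) (hn : 2 ≤ n) (l : ℝ) (hl : -(n / 2 : ℝ) < l)
    (μ : MeasureTheory.Measure (Metric.sphere (0 : EuclideanSpace ℝ (Fin n)) 1))
    [MeasureTheory.IsFiniteMeasure μ]
    (u : EuclideanSpace ℝ (Fin n) → ℝ)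
    (hu : ∀ x, ‖x‖ < 1 →
      u x = ∫ ξ, (1 - ‖x‖ ^ 2) ^ (1 + 2 * l) / ‖x - (ξ : EuclideanSpace ℝ (Fin n))‖ ^ ((n : ℝ) + 2 * l) ∂μ)
    (ζ : Metric.sphere (0 : EuclideanSpace ℝ (Fin n)) 1) :
    Filter.Tendsto (fun r : ℝ => (1 - r) ^ ((n : ℝ) - 1) * u (r • (ζ : EuclideanSpace ℝ (Fin n))))
      (nhdsWithin 1 (Set.Iio 1))
      (nhds ((2 : ℝ) ^ (1 + 2 * l) * (μ {ζ}).toReal)) := by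
  have hn2 : (2:ℝ) ≤ (n:ℝ) := by exact_mod_cast hn
  have hnl : (0:ℝ) < (n:ℝ) + 2 * l := by nlinarith
  have hζ : ‖(ζ : EuclideanSpace ℝ (Fin n))‖ = 1 := norm_eq_of_mem_sphere ζ
  set F : ℝ → Metric.sphere (0 : EuclideanSpace ℝ (Fin n)) 1 → ℝ := fun r ξ =>
      (1 - r) ^ ((n : ℝ) - 1) *
      ((1 - r ^ 2) ^ (1 + 2 * l) /
        ‖r • (ζ : EuclideanSpace ℝ (Fin n)) - (ξ : EuclideanSpace ℝ (Fin n))‖ ^ ((n : ℝ) + 2 * l))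
    with hFdef
  set g : Metric.sphere (0 : EuclideanSpace ℝ (Fin n)) 1 → ℝ := fun ξ =>
      Set.indicator ({ζ} : Set (Metric.sphere (0 : EuclideanSpace ℝ (Fin n)) 1))
        (fun _ => (2:ℝ) ^ (1 + 2 * l)) ξ with hgdef
  have hev : ∀ᶠ r in nhdsWithin (1:ℝ) (Set.Iio 1), r ∈ Set.Ioo (0:ℝ) 1 := by
    filter_upwards [self_mem_nhdsWithin,
      eventually_nhdsWithin_of_eventually_nhds (eventually_gt_nhds (by norm_num : (0:ℝ) < 1))]
      with r h1 h2
    exact ⟨h2, h1⟩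
  have hlow : ∀ r ∈ Set.Ioo (0:ℝ) 1, ∀ ξ : Metric.sphere (0 : EuclideanSpace ℝ (Fin n)) 1,
      1 - r ≤ ‖r • (ζ : EuclideanSpace ℝ (Fin n)) - (ξ : EuclideanSpace ℝ (Fin n))‖ := by
    intro r hr ξ
    have hξ : ‖(ξ : EuclideanSpace ℝ (Fin n))‖ = 1 := norm_eq_of_mem_sphere ξ
    have h := norm_sub_norm_le (ξ : EuclideanSpace ℝ (Fin n)) (r • (ζ : EuclideanSpace ℝ (Fin n)))
    rw [norm_sub_rev]
    have hns : ‖r • (ζ : EuclideanSpace ℝ (Fin n))‖ = r := by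
      rw [norm_smul, hζ, mul_one, Real.norm_eq_abs, abs_of_pos hr.1]
    rw [hξ, hns] at h
    exact h
  have hnum : ∀ r ∈ Set.Ioo (0:ℝ) 1,
      (1 - r) ^ ((n:ℝ) - 1) * (1 - r ^ 2) ^ (1 + 2 * l)
        = (1 - r) ^ ((n:ℝ) + 2 * l) * (1 + r) ^ (1 + 2 * l) := by
    intro r hr
    have h1 : (0:ℝ) < 1 - r := by linarith [hr.2]
    have h2 : (0:ℝ) < 1 + r := by linarith [hr.1]
    have hfac : (1 - r ^ 2 : ℝ) = (1 - r) * (1 + r) := by ring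
    rw [hfac, Real.mul_rpow h1.le h2.le, ← mul_assoc, ← Real.rpow_add h1]
    ring_nf
  have hFform : ∀ r ∈ Set.Ioo (0:ℝ) 1, ∀ ξ : Metric.sphere (0 : EuclideanSpace ℝ (Fin n)) 1,
      F r ξ = (1 - r) ^ ((n:ℝ) + 2 * l) * (1 + r) ^ (1 + 2 * l)
                / ‖r • (ζ : EuclideanSpace ℝ (Fin n)) - (ξ : EuclideanSpace ℝ (Fin n))‖ ^ ((n : ℝ) + 2 * l) := by
    intro r hr ξ
    rw [hFdef]
    dsimp only
    rw [mul_div_assoc', hnum r hr]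
  have hmeas : ∀ᶠ r in nhdsWithin (1:ℝ) (Set.Iio 1), AEStronglyMeasurable (F r) μ := by
    filter_upwards [hev] with r hr
    have hc : Continuous (F r) := by
      apply Continuous.mul continuous_const
      apply Continuous.div continuous_const
      · apply Continuous.rpow_const
        · exact (continuous_const.sub continuous_subtype_val).norm
        · intro ξ
          left
          exact ne_of_gt (lt_of_lt_of_le (by linarith [hr.2]) (hlow r hr ξ))
      · intro ξ
        have h0 : (0:ℝ) < ‖r • (ζ : EuclideanSpace ℝ (Fin n)) - (ξ : EuclideanSpace ℝ (Fin n))‖ :=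
          lt_of_lt_of_le (by linarith [hr.2]) (hlow r hr ξ)
        exact ne_of_gt (Real.rpow_pos_of_pos h0 _)
    exact hc.aestronglyMeasurable
  have hC1 : (1:ℝ) ≤ (2:ℝ) ^ |1 + 2 * l| := Real.one_le_rpow (by norm_num) (abs_nonneg _)
  have hbound : ∀ᶠ r in nhdsWithin (1:ℝ) (Set.Iio 1),
      ∀ᵐ ξ ∂μ, ‖F r ξ‖ ≤ (fun _ : Metric.sphere (0 : EuclideanSpace ℝ (Fin n)) 1 =>
        (2:ℝ) ^ |1 + 2 * l|) ξ := by
    filter_upwards [hev] with r hr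
    apply Filter.Eventually.of_forall
    intro ξ
    have h1 : (0:ℝ) < 1 - r := by linarith [hr.2]
    have h2 : (0:ℝ) < 1 + r := by linarith [hr.1]
    have hD0 : (0:ℝ) < ‖r • (ζ : EuclideanSpace ℝ (Fin n)) - (ξ : EuclideanSpace ℝ (Fin n))‖ :=
      lt_of_lt_of_le h1 (hlow r hr ξ)
    have hD : (0:ℝ) < ‖r • (ζ : EuclideanSpace ℝ (Fin n)) - (ξ : EuclideanSpace ℝ (Fin n))‖ ^ ((n:ℝ) + 2 * l) :=
      Real.rpow_pos_of_pos hD0 _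
    rw [hFform r hr ξ]
    have hA : (1 - r) ^ ((n:ℝ) + 2 * l)
        ≤ ‖r • (ζ : EuclideanSpace ℝ (Fin n)) - (ξ : EuclideanSpace ℝ (Fin n))‖ ^ ((n:ℝ) + 2 * l) :=
      Real.rpow_le_rpow h1.le (hlow r hr ξ) hnl.le
    have hB : (1 + r) ^ (1 + 2 * l) ≤ (2:ℝ) ^ |1 + 2 * l| := by
      rcases le_or_gt 0 (1 + 2 * l) with h | h
      · calc (1 + r) ^ (1 + 2 * l) ≤ (2:ℝ) ^ (1 + 2 * l) :=
              Real.rpow_le_rpow h2.le (by linarith [hr.2]) h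
          _ = (2:ℝ) ^ |1 + 2 * l| := by rw [abs_of_nonneg h]
      · calc (1 + r) ^ (1 + 2 * l) ≤ 1 :=
              Real.rpow_le_one_of_one_le_of_nonpos (by linarith [hr.1]) h.le
          _ ≤ (2:ℝ) ^ |1 + 2 * l| := hC1
    have hnonneg : (0:ℝ) ≤ (1 - r) ^ ((n:ℝ) + 2 * l) * (1 + r) ^ (1 + 2 * l)
        / ‖r • (ζ : EuclideanSpace ℝ (Fin n)) - (ξ : EuclideanSpace ℝ (Fin n))‖ ^ ((n : ℝ) + 2 * l) := by
      apply div_nonneg _ hD.le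
      exact mul_nonneg (Real.rpow_nonneg h1.le _) (Real.rpow_nonneg h2.le _)
    rw [Real.norm_eq_abs, abs_of_nonneg hnonneg, div_le_iff₀ hD]
    calc (1 - r) ^ ((n:ℝ) + 2 * l) * (1 + r) ^ (1 + 2 * l)
        ≤ ‖r • (ζ : EuclideanSpace ℝ (Fin n)) - (ξ : EuclideanSpace ℝ (Fin n))‖ ^ ((n:ℝ) + 2 * l)
            * ((2:ℝ) ^ |1 + 2 * l|) := mul_le_mul hA hB (Real.rpow_nonneg h2.le _) hD.le
      _ = (2:ℝ) ^ |1 + 2 * l|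
            * ‖r • (ζ : EuclideanSpace ℝ (Fin n)) - (ξ : EuclideanSpace ℝ (Fin n))‖ ^ ((n:ℝ) + 2 * l) :=
          mul_comm _ _
  have hlim : ∀ᵐ ξ ∂μ, Filter.Tendsto (fun r => F r ξ) (nhdsWithin (1:ℝ) (Set.Iio 1)) (nhds (g ξ)) := by
    apply Filter.Eventually.of_forall
    intro ξ
    by_cases hξζ : ξ = ζ
    · subst hξζ
      have hgv : g ξ = (2:ℝ) ^ (1 + 2 * l) := by rw [hgdef]; simp
      rw [hgv]
      have heq : ∀ᶠ r in nhdsWithin (1:ℝ) (Set.Iio 1), (1 + r) ^ (1 + 2 * l) = F r ξ := by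
        filter_upwards [hev] with r hr
        have h1 : (0:ℝ) < 1 - r := by linarith [hr.2]
        have hnorm : ‖r • (ξ : EuclideanSpace ℝ (Fin n)) - (ξ : EuclideanSpace ℝ (Fin n))‖ = 1 - r := by
          have hsm : r • (ξ : EuclideanSpace ℝ (Fin n)) - (ξ : EuclideanSpace ℝ (Fin n))
              = (r - 1) • (ξ : EuclideanSpace ℝ (Fin n)) := by
            rw [sub_smul, one_smul]
          rw [hsm, norm_smul, norm_eq_of_mem_sphere ξ, mul_one, Real.norm_eq_abs,
            abs_of_neg (by linarith [hr.2] : r - 1 < 0)]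
          ring
        rw [hFform r hr ξ, hnorm, mul_div_cancel_left₀ _ (ne_of_gt (Real.rpow_pos_of_pos h1 _))]
      apply Filter.Tendsto.congr' heq
      have ht : Filter.Tendsto (fun r : ℝ => 1 + r) (nhdsWithin (1:ℝ) (Set.Iio 1)) (nhds 2) := by
        have h : Filter.Tendsto (fun r : ℝ => 1 + r) (nhds (1:ℝ)) (nhds (1 + 1)) :=
          Continuous.tendsto (by continuity) 1
        norm_num at h
        exact h.mono_left nhdsWithin_le_nhds
      exact ht.rpow_const (Or.inl (by norm_num))
    · have hgv : g ξ = 0 := by rw [hgdef]; simp [hξζ]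
      rw [hgv]
      have hne : (ζ : EuclideanSpace ℝ (Fin n)) - (ξ : EuclideanSpace ℝ (Fin n)) ≠ 0 := by
        intro h
        exact hξζ (Subtype.coe_injective (sub_eq_zero.mp h).symm)
      have hDne : ‖(ζ : EuclideanSpace ℝ (Fin n)) - (ξ : EuclideanSpace ℝ (Fin n))‖ ≠ 0 :=
        norm_ne_zero_iff.mpr hne
      have heq : ∀ᶠ r in nhdsWithin (1:ℝ) (Set.Iio 1),
          (1 - r) ^ ((n:ℝ) + 2 * l) * (1 + r) ^ (1 + 2 * l)
            / ‖r • (ζ : EuclideanSpace ℝ (Fin n)) - (ξ : EuclideanSpace ℝ (Fin n))‖ ^ ((n : ℝ) + 2 * l)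
          = F r ξ := by
        filter_upwards [hev] with r hr
        exact (hFform r hr ξ).symm
      apply Filter.Tendsto.congr' heq
      have hden : Filter.Tendsto
          (fun r : ℝ => ‖r • (ζ : EuclideanSpace ℝ (Fin n)) - (ξ : EuclideanSpace ℝ (Fin n))‖ ^ ((n : ℝ) + 2 * l))
          (nhdsWithin (1:ℝ) (Set.Iio 1))
          (nhds (‖(ζ : EuclideanSpace ℝ (Fin n)) - (ξ : EuclideanSpace ℝ (Fin n))‖ ^ ((n : ℝ) + 2 * l))) := by
        have hc : Continuous (fun r : ℝ =>
            ‖r • (ζ : EuclideanSpace ℝ (Fin n)) - (ξ : EuclideanSpace ℝ (Fin n))‖) :=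
          by fun_prop
        have h := (hc.tendsto (1:ℝ)).mono_left (nhdsWithin_le_nhds (s := Set.Iio (1:ℝ)))
        simp only [one_smul] at h
        exact h.rpow_const (Or.inl hDne)
      have hnum0 : Filter.Tendsto (fun r : ℝ => (1 - r) ^ ((n:ℝ) + 2 * l) * (1 + r) ^ (1 + 2 * l))
          (nhdsWithin (1:ℝ) (Set.Iio 1)) (nhds 0) := by
        have h1 : Filter.Tendsto (fun r : ℝ => (1 - r : ℝ)) (nhdsWithin (1:ℝ) (Set.Iio 1)) (nhds 0) := by
          have h : Filter.Tendsto (fun r : ℝ => (1 - r : ℝ)) (nhds (1:ℝ)) (nhds (1 - 1)) :=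
            Continuous.tendsto (by continuity) 1
          norm_num at h
          exact h.mono_left nhdsWithin_le_nhds
        have h1' : Filter.Tendsto (fun r : ℝ => (1 - r) ^ ((n:ℝ) + 2 * l))
            (nhdsWithin (1:ℝ) (Set.Iio 1)) (nhds 0) := by
          have h := h1.rpow_const (Or.inr hnl.le)
          rwa [Real.zero_rpow (ne_of_gt hnl)] at h
        have h2 : Filter.Tendsto (fun r : ℝ => (1 + r) ^ (1 + 2 * l))
            (nhdsWithin (1:ℝ) (Set.Iio 1)) (nhds ((2:ℝ) ^ (1 + 2 * l))) := by
          have ht : Filter.Tendsto (fun r : ℝ => 1 + r) (nhds (1:ℝ)) (nhds 2) := by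
            have h : Filter.Tendsto (fun r : ℝ => 1 + r) (nhds (1:ℝ)) (nhds (1 + 1)) :=
              Continuous.tendsto (by continuity) 1
            norm_num at h
            exact h
          exact (ht.mono_left nhdsWithin_le_nhds).rpow_const (Or.inl (by norm_num))
        have h := h1'.mul h2
        simpa using h
      have hdiv := hnum0.div hden (ne_of_gt (Real.rpow_pos_of_pos
        (lt_of_le_of_ne (norm_nonneg _) (Ne.symm hDne)) _))
      rw [zero_div] at hdiv; exact hdiv
  have main := MeasureTheory.tendsto_integral_filter_of_dominated_convergence
    (μ := μ) (F := F) (f := g) _ hmeas hbound (integrable_const _) hlim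
  have hg : ∫ ξ, g ξ ∂μ = (2:ℝ) ^ (1 + 2 * l) * (μ {ζ}).toReal := by
    rw [hgdef, MeasureTheory.integral_indicator_const _ (measurableSet_singleton ζ),
      smul_eq_mul, mul_comm, MeasureTheory.measureReal_def]
  rw [hg] at main
  apply main.congr'
  filter_upwards [hev] with r hr
  have hnorm : ‖r • (ζ : EuclideanSpace ℝ (Fin n))‖ = r := by
    rw [norm_smul, hζ, mul_one, Real.norm_eq_abs, abs_of_pos hr.1]
  have hlt : ‖r • (ζ : EuclideanSpace ℝ (Fin n))‖ < 1 := by rw [hnorm]; exact hr.2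
  rw [hu _ hlt, hnorm, ← MeasureTheory.integral_const_mul]
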